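/- If P₁ ≤_cx P₂ in the convex order and P₂ has a log-concave density p₂, then the differential entropies satisfy H(P₁) ≤ H(P₂). -/

import Mathlib

open MeasureTheory ENNReal NNReal

lemma exists_density_minorant {α : Type*} [MeasurableSpace α] (μ : Measure α)
    (f : α → ℝ≥0∞) (hf : ∫⁻ x, f x ∂μ ≠ ∞) :
    ∃ g : α → ℝ≥0∞, Measurable g ∧ (∀ x, g x ≤ f x) ∧
      (∀ s : Set α, MeasurableSet s → ∫⁻ x in s, g x ∂μ = ∫⁻ x in s, f x ∂μ) ∧
      μ.withDensity g = μ.withDensity f := by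
  obtain ⟨g, hgm, hgle, hgint⟩ := exists_measurable_le_lintegral_eq μ f
  have hsets : ∀ s : Set α, MeasurableSet s → ∫⁻ x in s, g x ∂μ = ∫⁻ x in s, f x ∂μ := by
    intro s hs
    have h1 : ∫⁻ x in s, g x ∂μ ≤ ∫⁻ x in s, f x ∂μ := lintegral_mono hgle
    have h2 : ∫⁻ x in sᶜ, g x ∂μ ≤ ∫⁻ x in sᶜ, f x ∂μ := lintegral_mono hgle
    have hg_tot : ∫⁻ x in s, g x ∂μ + ∫⁻ x in sᶜ, g x ∂μ = ∫⁻ x, g x ∂μ :=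
      lintegral_add_compl g hs
    have hf_tot : ∫⁻ x in s, f x ∂μ + ∫⁻ x in sᶜ, f x ∂μ = ∫⁻ x, f x ∂μ :=
      lintegral_add_compl f hs
    by_contra hne
    have hlt : ∫⁻ x in s, g x ∂μ < ∫⁻ x in s, f x ∂μ := lt_of_le_of_ne h1 hne
    have : ∫⁻ x, g x ∂μ < ∫⁻ x, f x ∂μ := by
      rw [← hg_tot, ← hf_tot]
      have hgc : ∫⁻ x in sᶜ, g x ∂μ ≠ ∞ := by
        intro h
        exact hf (by rw [← hf_tot]; exact eq_top_iff.2 ((h ▸ h2).trans le_add_self))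
      exact ENNReal.add_lt_add_of_lt_of_le hgc hlt h2
    exact absurd hgint this.ne'
  refine ⟨g, hgm, hgle, hsets, ?_⟩
  ext s hs
  rw [withDensity_apply _ hs, withDensity_apply _ hs, hsets s hs]

lemma mul_log_uc {ε : ℝ} (hε : 0 < ε) :
    ∃ δ : ℝ, 0 < δ ∧ ∀ a b : ℝ, a ∈ Set.Icc (0:ℝ) 1 → b ∈ Set.Icc (0:ℝ) 1 →
      |a - b| < δ → |a * Real.log a - b * Real.log b| < ε := by
  have hc : UniformContinuousOn (fun x : ℝ => x * Real.log x) (Set.Icc 0 1) :=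
    isCompact_Icc.uniformContinuousOn_of_continuous Real.continuous_mul_log.continuousOn
  rw [Metric.uniformContinuousOn_iff] at hc
  obtain ⟨δ, hδ, hδ'⟩ := hc ε hε
  exact ⟨δ, hδ, fun a b ha hb hab => by
    simpa [Real.dist_eq] using hδ' a ha b hb (by simpa [Real.dist_eq] using hab)⟩

/-- If P₁ ≤_cx P₂ in the convex order and P₂ has a log-concave density p₂, then the
differential entropies satisfy H(P₁) ≤ H(P₂), where H(P) = −∫ p log p. -/
theorem differential_entropy_mono_convex_order_logconcave
    {d : ℕ}
    (p₁ p₂ : EuclideanSpace ℝ (Fin d) → ℝ)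
    (hp₁ : ∀ x, 0 ≤ p₁ x) (hp₂ : ∀ x, 0 ≤ p₂ x)
    (P₁ P₂ : Measure (EuclideanSpace ℝ (Fin d)))
    (hP₁ : P₁ = MeasureTheory.volume.withDensity (fun x => ENNReal.ofReal (p₁ x)))
    (hP₂ : P₂ = MeasureTheory.volume.withDensity (fun x => ENNReal.ofReal (p₂ x)))
    [IsProbabilityMeasure P₁] [IsProbabilityMeasure P₂]
    (φ : EuclideanSpace ℝ (Fin d) → ℝ)
    (hφ : ConcaveOn ℝ Set.univ φ)
    (hlogconcave : ∀ x, p₂ x = Real.exp (φ x))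
    (hcx : ∀ f : EuclideanSpace ℝ (Fin d) → ℝ, ConvexOn ℝ Set.univ f →
      Integrable f P₁ → Integrable f P₂ → ∫ x, f x ∂P₁ ≤ ∫ x, f x ∂P₂)
    (hint₁ : Integrable (fun x => p₁ x * Real.log (p₁ x)) MeasureTheory.volume)
    (hint₂ : Integrable (fun x => p₂ x * Real.log (p₂ x)) MeasureTheory.volume)
    (hcross : Integrable (fun x => -Real.log (p₂ x)) P₁) :
    -(∫ x, p₁ x * Real.log (p₁ x)) ≤ -(∫ x, p₂ x * Real.log (p₂ x)) := by
  classical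
  set μ : Measure (EuclideanSpace ℝ (Fin d)) := MeasureTheory.volume with hμ
  -- basic facts about φ and p₂
  have hφcont : Continuous φ := by
    have h1 : ConvexOn ℝ Set.univ (fun x => -φ x) := hφ.neg
    have h2 : ContinuousOn (fun x => -φ x) Set.univ := h1.continuousOn isOpen_univ
    have : Continuous (fun x => -φ x) := continuousOn_univ.1 h2
    have h3 : Continuous fun x => -(-φ x) := this.neg
    simpa only [neg_neg] using h3
  have hp₂pos : ∀ x, 0 < p₂ x := fun x => (hlogconcave x).symm ▸ Real.exp_pos _
  have hp₂cont : Continuous p₂ := by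
    have : Continuous (fun x => Real.exp (φ x)) := Real.continuous_exp.comp hφcont
    simpa [← hlogconcave] using (funext hlogconcave : p₂ = fun x => Real.exp (φ x)) ▸ this
  have hlogp₂ : ∀ x, Real.log (p₂ x) = φ x := fun x => by
    rw [hlogconcave x, Real.log_exp]
  -- the density of P₂
  have hf₂meas : Measurable (fun x => ENNReal.ofReal (p₂ x)) :=
    ENNReal.measurable_ofReal.comp hp₂cont.measurable
  have htot₂ : ∫⁻ x, ENNReal.ofReal (p₂ x) ∂μ = 1 := by
    have := measure_univ (μ := P₂)
    rwa [hP₂, withDensity_apply _ MeasurableSet.univ, Measure.restrict_univ] at this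
  -- measurable minorant density for P₁
  have htot₁ : ∫⁻ x, ENNReal.ofReal (p₁ x) ∂μ = 1 := by
    have := measure_univ (μ := P₁)
    rwa [hP₁, withDensity_apply _ MeasurableSet.univ, Measure.restrict_univ] at this
  obtain ⟨g, hgm, hgle, hgsets, hgP₁⟩ :=
    exists_density_minorant μ (fun x => ENNReal.ofReal (p₁ x)) (by rw [htot₁]; exact one_ne_top)
  have hP₁g : P₁ = μ.withDensity g := by rw [hP₁, hgP₁]
  have hglt : ∀ x, g x < ∞ := fun x => lt_of_le_of_lt (hgle x) ofReal_lt_top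
  have hgtot : ∫⁻ x, g x ∂μ = 1 := by
    have := hgsets Set.univ MeasurableSet.univ
    simp only [Measure.restrict_univ] at this
    rw [this, htot₁]
  set G : EuclideanSpace ℝ (Fin d) → ℝ := fun x => (g x).toReal with hG
  have hGmeas : Measurable G := hgm.ennreal_toReal
  have hGnn : ∀ x, 0 ≤ G x := fun x => ENNReal.toReal_nonneg
  have hGle : ∀ x, G x ≤ p₁ x := fun x => by
    calc (g x).toReal ≤ (ENNReal.ofReal (p₁ x)).toReal :=
          ENNReal.toReal_mono ofReal_ne_top (hgle x)
      _ = p₁ x := ENNReal.toReal_ofReal (hp₁ x)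
  have hgof : ∀ x, g x = ENNReal.ofReal (G x) := fun x =>
    (ENNReal.ofReal_toReal (hglt x).ne).symm
  -- a.e. measurable version of p₁ log p₁
  set h : EuclideanSpace ℝ (Fin d) → ℝ := fun x => p₁ x * Real.log (p₁ x) with hh
  obtain ⟨h', hh'sm, hh'ae⟩ : ∃ h' : EuclideanSpace ℝ (Fin d) → ℝ, StronglyMeasurable h' ∧ h =ᵐ[μ] h' :=
    ⟨hint₁.1.mk h, hint₁.1.stronglyMeasurable_mk, hint₁.1.ae_eq_mk⟩
  have hh'meas : Measurable h' := hh'sm.measurable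
  -- step: sets where p₁ exceeds G by δ are null
  have hinner : ∀ δ : ℝ, 0 < δ → ∀ s : Set (EuclideanSpace ℝ (Fin d)), MeasurableSet s →
      (∀ x ∈ s, G x + δ ≤ p₁ x) → μ s = 0 := by
    intro δ hδ s hs hps
    have h1 : ∫⁻ x in s, (g x + ENNReal.ofReal δ) ∂μ ≤ ∫⁻ x in s, ENNReal.ofReal (p₁ x) ∂μ := by
      refine lintegral_mono_ae ?_
      filter_upwards [ae_restrict_mem hs] with x hx
      calc g x + ENNReal.ofReal δ = ENNReal.ofReal (G x) + ENNReal.ofReal δ := by rw [← hgof]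
        _ = ENNReal.ofReal (G x + δ) := (ENNReal.ofReal_add (hGnn x) hδ.le).symm
        _ ≤ ENNReal.ofReal (p₁ x) := ENNReal.ofReal_le_ofReal (hps x hx)
    have h2 : ∫⁻ x in s, (g x + ENNReal.ofReal δ) ∂μ
        = ∫⁻ x in s, g x ∂μ + ENNReal.ofReal δ * μ s := by
      rw [lintegral_add_right _ measurable_const, setLIntegral_const]
    rw [h2, ← hgsets s hs] at h1
    have hfin : ∫⁻ x in s, g x ∂μ ≠ ∞ := by
      refine ne_of_lt (lt_of_le_of_lt (setLIntegral_le_lintegral _ _) ?_)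
      rw [hgtot]; exact one_lt_top
    have h3 : ∫⁻ x in s, g x ∂μ + ENNReal.ofReal δ * μ s ≤ ∫⁻ x in s, g x ∂μ + 0 := by
      simpa using h1
    have h4 : ENNReal.ofReal δ * μ s = 0 :=
      le_antisymm (ENNReal.le_of_add_le_add_left hfin h3) zero_le
    rcases mul_eq_zero.1 h4 with h5 | h5
    · exact absurd h5 (ENNReal.ofReal_pos.2 hδ).ne'
    · exact h5
  -- step: a.e., G log G ≤ h'
  have hae : ∀ᵐ x ∂μ, G x * Real.log (G x) ≤ h' x := by
    set N := toMeasurable μ {x | h x ≠ h' x} with hN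
    have hNnull : μ N = 0 := by
      rw [hN, measure_toMeasurable]
      exact hh'ae
    have hNmeas : MeasurableSet N := measurableSet_toMeasurable _ _
    set B : ℕ → Set (EuclideanSpace ℝ (Fin d)) :=
      fun n => {x | h' x + 1 / (n + 1) ≤ G x * Real.log (G x)} with hB
    have hGlogGmeas : Measurable (fun x => G x * Real.log (G x)) :=
      hGmeas.mul (Real.measurable_log.comp hGmeas)
    have hBmeas : ∀ n, MeasurableSet (B n) :=
      fun n => measurableSet_le (hh'meas.add measurable_const) hGlogGmeas
    have hBn : ∀ n, μ (B n) = 0 := by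
      intro n
      have hε : (0:ℝ) < 1 / (n + 1) := by positivity
      obtain ⟨δ, hδ, huc⟩ := mul_log_uc hε
      have hsub : ∀ x ∈ B n \ N, G x + δ ≤ p₁ x := by
        rintro x ⟨hxB, hxN⟩
        have hhx : h x = h' x := by
          by_contra hne
          exact hxN (subset_toMeasurable _ _ hne)
        have hkey : p₁ x * Real.log (p₁ x) + 1 / (n + 1) ≤ G x * Real.log (G x) := by
          have : h x + 1 / (n + 1) ≤ G x * Real.log (G x) := by rw [hhx]; exact hxB
          simpa [hh] using this
        have hG1 : G x ≤ 1 := by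
          by_contra hG1
          push_neg at hG1
          have hGpos : (0:ℝ) < G x := lt_trans zero_lt_one hG1
          have hmono : G x * Real.log (G x) ≤ p₁ x * Real.log (p₁ x) :=
            mul_le_mul (hGle x) (Real.log_le_log hGpos (hGle x))
              (Real.log_nonneg hG1.le) (hp₁ x)
          linarith
        have hGl0 : G x * Real.log (G x) ≤ 0 :=
          mul_nonpos_iff.2 (Or.inl ⟨hGnn x, Real.log_nonpos (hGnn x) hG1⟩)
        have hp₁1 : p₁ x ≤ 1 := by
          by_contra hp
          push_neg at hp
          have : 0 ≤ p₁ x * Real.log (p₁ x) := mul_nonneg (hp₁ x) (Real.log_nonneg hp.le)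
          linarith
        by_contra hcon
        push_neg at hcon
        have habs : |G x - p₁ x| < δ := by
          rw [abs_sub_comm, abs_of_nonneg (by linarith [hGle x])]
          linarith
        have h2 := abs_lt.1 (huc (G x) (p₁ x) ⟨hGnn x, hG1⟩ ⟨hp₁ x, hp₁1⟩ habs)
        linarith [h2.2]
      have hs0 : μ (B n \ N) = 0 :=
        hinner δ hδ _ ((hBmeas n).diff hNmeas) hsub
      refine le_antisymm ?_ zero_le
      calc μ (B n) ≤ μ ((B n \ N) ∪ N) := measure_mono (by
            intro x hx
            by_cases hxN : x ∈ N
            · exact Or.inr hxN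
            · exact Or.inl ⟨hx, hxN⟩)
        _ ≤ μ (B n \ N) + μ N := measure_union_le _ _
        _ = 0 := by rw [hs0, hNnull, add_zero]
    have hBadsub : {x | ¬ G x * Real.log (G x) ≤ h' x} ⊆ ⋃ n, B n := by
      intro x hx
      rw [Set.mem_setOf_eq, not_le] at hx
      obtain ⟨n, hn⟩ := exists_nat_one_div_lt (show (0:ℝ) < G x * Real.log (G x) - h' x by linarith)
      exact Set.mem_iUnion.2 ⟨n, by simp only [hB, Set.mem_setOf_eq]; linarith⟩
    rw [ae_iff]
    exact measure_mono_null hBadsub (measure_iUnion_null hBn)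
  -- integrability facts
  have hG_int : Integrable G μ := by
    exact integrable_toReal_of_lintegral_ne_top (f := g) (μ := μ) hgm.aemeasurable
      (by rw [hgtot]; exact one_ne_top)
  have hG_integral : ∫ x, G x ∂μ = 1 := by
    have := integral_toReal (μ := μ) hgm.aemeasurable (Filter.Eventually.of_forall hglt)
    rw [hgtot] at this
    simpa using this
  have hp₂_int : Integrable p₂ μ := by
    have := integrable_toReal_of_lintegral_ne_top hf₂meas.aemeasurable
      (by rw [htot₂]; exact one_ne_top)
    exact this.congr (Filter.Eventually.of_forall fun x => ENNReal.toReal_ofReal (hp₂ x))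
  have hp₂_integral : ∫ x, p₂ x ∂μ = 1 := by
    have := integral_toReal (μ := μ) hf₂meas.aemeasurable
      (Filter.Eventually.of_forall fun x => ofReal_lt_top)
    rw [htot₂] at this
    have h1 : ∫ x, p₂ x ∂μ = ∫ x, (ENNReal.ofReal (p₂ x)).toReal ∂μ :=
      integral_congr_ae (Filter.Eventually.of_forall
        fun x => (ENNReal.toReal_ofReal (hp₂ x)).symm)
    rw [h1]
    simpa using this
  have hGφ_int : Integrable (fun x => -φ x * G x) μ := by
    have hc := hcross
    rw [hP₁g] at hc
    rw [integrable_withDensity_iff hgm (Filter.Eventually.of_forall hglt)] at hc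
    refine hc.congr (Filter.Eventually.of_forall fun x => ?_)
    show -Real.log (p₂ x) * (g x).toReal = -φ x * G x
    rw [hlogp₂ x]
  -- pointwise Gibbs inequality
  have hgibbs_pt : ∀ x, -(G x * Real.log (G x)) ≤ -φ x * G x + (p₂ x - G x) := by
    intro x
    rcases eq_or_lt_of_le (hGnn x) with hG0 | hGpos
    · rw [← hG0]
      simp [(hp₂ x)]
    · have h1 : Real.log (p₂ x) - Real.log (G x) ≤ p₂ x / G x - 1 := by
        have := Real.log_le_sub_one_of_pos (div_pos (hp₂pos x) hGpos)
        rwa [Real.log_div (hp₂pos x).ne' hGpos.ne'] at this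
      have h2 : (Real.log (p₂ x) - Real.log (G x)) * G x ≤ p₂ x - G x := by
        have h3 := mul_le_mul_of_nonneg_right h1 hGpos.le
        have h4 : (p₂ x / G x - 1) * G x = p₂ x - G x := by field_simp
        rw [h4] at h3
        exact h3
      have hφx : φ x = Real.log (p₂ x) := (hlogp₂ x).symm
      rw [hφx]
      nlinarith [h2]
  have hGlogG_int : Integrable (fun x => G x * Real.log (G x)) μ := by
    have hsm : AEStronglyMeasurable (fun x => G x * Real.log (G x)) μ :=
      (hGmeas.mul (Real.measurable_log.comp hGmeas)).aestronglyMeasurable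
    have hbd_int : Integrable (fun x => |h' x| + |(-φ x * G x) + (p₂ x - G x)|) μ :=
      (hint₁.congr hh'ae).abs.add (hGφ_int.add (hp₂_int.sub hG_int)).abs
    refine hbd_int.mono hsm ?_
    filter_upwards [hae] with x hx
    have hnn : (0:ℝ) ≤ |h' x| + |(-φ x * G x) + (p₂ x - G x)| := by positivity
    rw [Real.norm_eq_abs, Real.norm_eq_abs, abs_of_nonneg hnn]
    rcases le_or_gt 0 (G x * Real.log (G x)) with hpos | hneg
    · rw [abs_of_nonneg hpos]
      calc G x * Real.log (G x) ≤ h' x := hx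
        _ ≤ |h' x| := le_abs_self _
        _ ≤ _ := le_add_of_nonneg_right (abs_nonneg _)
    · rw [abs_of_neg hneg]
      calc -(G x * Real.log (G x)) ≤ -φ x * G x + (p₂ x - G x) := hgibbs_pt x
        _ ≤ |(-φ x * G x) + (p₂ x - G x)| := le_abs_self _
        _ ≤ _ := le_add_of_nonneg_left (abs_nonneg _)
  -- integral Gibbs inequality
  have hgibbs : -(∫ x, G x * Real.log (G x) ∂μ) ≤ ∫ x, -Real.log (p₂ x) ∂P₁ := by
    have hsub_int : Integrable (fun x => p₂ x - G x) μ := hp₂_int.sub hG_int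
    have hmono : ∫ x, -(G x * Real.log (G x)) ∂μ ≤ ∫ x, (-φ x * G x + (p₂ x - G x)) ∂μ :=
      integral_mono hGlogG_int.neg (hGφ_int.add hsub_int)
        (fun x => hgibbs_pt x)
    rw [integral_neg, integral_add hGφ_int hsub_int,
      integral_sub hp₂_int hG_int, hp₂_integral, hG_integral] at hmono
    have hrepr : ∫ x, -Real.log (p₂ x) ∂P₁ = ∫ x, -φ x * G x ∂μ := by
      set g' : EuclideanSpace ℝ (Fin d) → ℝ≥0 := fun x => (g x).toNNReal with hg'
      have hg'meas : Measurable g' := hgm.ennreal_toNNReal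
      have hwd : μ.withDensity g = μ.withDensity (fun x => (g' x : ℝ≥0∞)) := by
        congr 1
        funext x
        exact (ENNReal.coe_toNNReal (hglt x).ne).symm
      rw [hP₁g, hwd, integral_withDensity_eq_integral_smul hg'meas]
      refine integral_congr_ae (Filter.Eventually.of_forall fun x => ?_)
      show g' x • (-Real.log (p₂ x)) = -φ x * G x
      rw [NNReal.smul_def, smul_eq_mul, hlogp₂ x]
      have : (g' x : ℝ) = G x := rfl
      rw [this]
      ring
    rw [hrepr]
    linarith
  -- convex order step
  have hconvord : ∫ x, -Real.log (p₂ x) ∂P₁ ≤ ∫ x, -Real.log (p₂ x) ∂P₂ := by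
    have hcvx : ConvexOn ℝ Set.univ (fun x => -Real.log (p₂ x)) := by
      have heq : (fun x : EuclideanSpace ℝ (Fin d) => -Real.log (p₂ x))
          = fun x => -φ x := funext fun x => by rw [hlogp₂ x]
      rw [heq]
      exact hφ.neg
    have hint₂' : Integrable (fun x => -Real.log (p₂ x)) P₂ := by
      rw [hP₂, integrable_withDensity_iff hf₂meas
        (Filter.Eventually.of_forall fun x => ofReal_lt_top)]
      refine hint₂.neg.congr (Filter.Eventually.of_forall fun x => ?_)
      show -(p₂ x * Real.log (p₂ x)) = -Real.log (p₂ x) * (ENNReal.ofReal (p₂ x)).toReal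
      rw [ENNReal.toReal_ofReal (hp₂ x)]
      ring
    exact hcx _ hcvx hcross hint₂'
  -- identification of the right side
  have hright : ∫ x, -Real.log (p₂ x) ∂P₂ = -(∫ x, p₂ x * Real.log (p₂ x) ∂μ) := by
    have hmeas2 : Measurable (fun x => Real.toNNReal (p₂ x)) := hp₂cont.measurable.real_toNNReal
    have : P₂ = μ.withDensity (fun x => ((Real.toNNReal (p₂ x) : ℝ≥0) : ℝ≥0∞)) := hP₂
    rw [this, integral_withDensity_eq_integral_smul hmeas2]
    rw [← integral_neg]
    refine integral_congr_ae (Filter.Eventually.of_forall fun x => ?_)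
    show Real.toNNReal (p₂ x) • (-Real.log (p₂ x)) = -(p₂ x * Real.log (p₂ x))
    rw [NNReal.smul_def, smul_eq_mul, Real.coe_toNNReal _ (hp₂ x)]
    ring
  -- comparison of entropies on the left
  have hleft : -(∫ x, h x ∂μ) ≤ -(∫ x, G x * Real.log (G x) ∂μ) := by
    have h1 : ∫ x, G x * Real.log (G x) ∂μ ≤ ∫ x, h' x ∂μ :=
      integral_mono_ae hGlogG_int (hint₁.congr hh'ae) hae
    have h2 : ∫ x, h x ∂μ = ∫ x, h' x ∂μ := integral_congr_ae hh'ae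
    linarith
  calc -(∫ x, p₁ x * Real.log (p₁ x)) = -(∫ x, h x ∂μ) := rfl
    _ ≤ -(∫ x, G x * Real.log (G x) ∂μ) := hleft
    _ ≤ ∫ x, -Real.log (p₂ x) ∂P₁ := hgibbs
    _ ≤ ∫ x, -Real.log (p₂ x) ∂P₂ := hconvord
    _ = -(∫ x, p₂ x * Real.log (p₂ x) ∂μ) := hright
    _ = -(∫ x, p₂ x * Real.log (p₂ x)) := rfl
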